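/- Let H̃ ≤ G × G′ be a subdirect product of finite groups G and G′, with projections φ₁ : H̃ → G and φ₂ : H̃ → G′. Let M be a G-lattice with flabby resolution 0 → M → P → F → 0, and let M′ be a G′-lattice with flabby resolution 0 → M′ → P′ → F′ → 0 such that F′ is stably permutation (i.e. [M′]^fl = 0). Regard M ⊕ M′ as an H̃-lattice, where H̃ acts on M through φ₁ and on M′ through φ₂. Then the inflation to H̃ of F ⊕ F′ is a flabby quotient of the H̃-lattice M ⊕ M′ and is similar, as an H̃-lattice, to the inflation of F; hence [M ⊕ M′]^fl = [M]^fl as H̃-lattices. -/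

import Mathlib

/- In this file, a `G`-lattice is encoded as a `Representation ℤ G M` on a ℤ-module `M`
which is finite and free over `ℤ` (typeclass assumptions `Module.Free ℤ M`,
`Module.Finite ℤ M`). -/

attribute [instance 2000] Prod.instModule Pi.module

/-- The direct sum of two representations of a group `G` over `R`. -/
def prodRep {R G M N : Type} [CommRing R] [Group G]
    [AddCommGroup M] [Module R M] [AddCommGroup N] [Module R N]
    (ρ : Representation R G M) (τ : Representation R G N) :
    Representation R G (M × N) where
  toFun g := LinearMap.prodMap (ρ g) (τ g)
  map_one' := LinearMap.ext fun x => by simp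
  map_mul' g h := LinearMap.ext fun x => by simp

/-- Inflation (or restriction) of a representation along a group homomorphism. -/
def inflRep {R H G M : Type} [CommRing R] [Group H] [Group G]
    [AddCommGroup M] [Module R M]
    (ρ : Representation R G M) (φ : H →* G) : Representation R H M :=
  MonoidHom.comp ρ φ

/-- A permutation lattice: the module has a finite basis permuted by the group action. -/
def IsPermutationRep {R G M : Type} [CommRing R] [Group G] [AddCommGroup M] [Module R M]
    (ρ : Representation R G M) : Prop :=
  ∃ (ι : Type) (_ : Fintype ι) (b : Module.Basis ι R M),
    ∀ (g : G) (i : ι), ∃ j : ι, ρ g (b i) = b j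

/-- An equivariant isomorphism between two representations. -/
def RepIso {R G M N : Type} [CommRing R] [Group G] [AddCommGroup M] [Module R M]
    [AddCommGroup N] [Module R N]
    (ρ : Representation R G M) (τ : Representation R G N) : Prop :=
  ∃ e : M ≃ₗ[R] N, ∀ (g : G) (m : M), e (ρ g m) = τ g (e m)

/-- Flabbiness: the Tate cohomology group `Ĥ⁻¹(H, M)` vanishes for every subgroup `H ≤ G`,
i.e. every element of `M` killed by the norm element of `H` lies in the subgroup
generated by the elements `h • m' - m'` (`h ∈ H`, `m' ∈ M`). -/
def IsFlabbyRep {G M : Type} [Group G] [AddCommGroup M] [Module ℤ M]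
    (ρ : Representation ℤ G M) : Prop :=
  ∀ (H : Subgroup G) (m : M),
    (∑ᶠ h : H, ρ (h : G) m) = 0 →
      m ∈ AddSubgroup.closure {x : M | ∃ (h : H) (m' : M), x = ρ ((h : G)) m' - m'}

/-- Coflabbiness: `H¹(H, M) = 0` for every subgroup `H ≤ G`, i.e. every `1`-cocycle on `H`
with values in `M` is a coboundary. -/
def IsCoflabbyRep {G M : Type} [Group G] [AddCommGroup M] [Module ℤ M]
    (ρ : Representation ℤ G M) : Prop :=
  ∀ (H : Subgroup G) (f : H → M),
    (∀ h₁ h₂ : H, f (h₁ * h₂) = ρ ((h₁ : G)) (f h₂) + f h₁) →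
    ∃ m : M, ∀ x : H, f x = ρ ((x : G)) m - m

/-- Stably permutation: the lattice becomes permutation after adding a permutation lattice. -/
def IsStablyPermutationRep {G M : Type} [Group G] [AddCommGroup M] [Module ℤ M]
    (ρ : Representation ℤ G M) : Prop :=
  ∃ (Q : Type) (_ : AddCommGroup Q) (_ : Module ℤ Q) (σ : Representation ℤ G Q)
    (Q' : Type) (_ : AddCommGroup Q') (_ : Module ℤ Q') (σ' : Representation ℤ G Q'),
    IsPermutationRep σ ∧ IsPermutationRep σ' ∧ RepIso (prodRep ρ σ) σ'

/-- Invertible: the lattice is a direct summand of a permutation lattice. -/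
def IsInvertibleRep {G M : Type} [Group G] [AddCommGroup M] [Module ℤ M]
    (ρ : Representation ℤ G M) : Prop :=
  ∃ (N : Type) (_ : AddCommGroup N) (_ : Module ℤ N) (τ : Representation ℤ G N),
    IsPermutationRep (prodRep ρ τ)

/-- Similarity of lattices: they become isomorphic after adding permutation lattices. -/
def SimilarRep {G M N : Type} [Group G] [AddCommGroup M] [Module ℤ M]
    [AddCommGroup N] [Module ℤ N]
    (ρ : Representation ℤ G M) (τ : Representation ℤ G N) : Prop :=
  ∃ (Q : Type) (_ : AddCommGroup Q) (_ : Module ℤ Q) (σ : Representation ℤ G Q)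
    (Q' : Type) (_ : AddCommGroup Q') (_ : Module ℤ Q') (σ' : Representation ℤ G Q'),
    IsPermutationRep σ ∧ IsPermutationRep σ' ∧ RepIso (prodRep ρ σ) (prodRep τ σ')

/-- A short exact sequence `0 → M → P → F → 0` of `G`-equivariant `ℤ`-linear maps. -/
def IsEquivariantExact {G M P F : Type} [Group G] [AddCommGroup M] [Module ℤ M]
    [AddCommGroup P] [Module ℤ P] [AddCommGroup F] [Module ℤ F]
    (ρM : Representation ℤ G M) (ρP : Representation ℤ G P) (ρF : Representation ℤ G F)
    (i : M →ₗ[ℤ] P) (π : P →ₗ[ℤ] F) : Prop :=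
  Function.Injective i ∧ Function.Surjective π ∧ LinearMap.range i = LinearMap.ker π ∧
  (∀ (g : G) (m : M), i (ρM g m) = ρP g (i m)) ∧
  (∀ (g : G) (x : P), π (ρP g x) = ρF g (π x))

/-- A flabby resolution `0 → M → P → F → 0`: exact and equivariant, `P` a permutation
lattice and `F` flabby. -/
def IsFlabbyResolution {G M P F : Type} [Group G] [AddCommGroup M] [Module ℤ M]
    [AddCommGroup P] [Module ℤ P] [AddCommGroup F] [Module ℤ F]
    (ρM : Representation ℤ G M) (ρP : Representation ℤ G P) (ρF : Representation ℤ G F)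
    (i : M →ₗ[ℤ] P) (π : P →ₗ[ℤ] F) : Prop :=
  IsEquivariantExact ρM ρP ρF i π ∧ IsPermutationRep ρP ∧ IsFlabbyRep ρF

/-- `F` is a flabby quotient of `M`, i.e. it fits into some flabby resolution of `M`;
it then represents the flabby class `[M]^fl`. -/
def IsFlabbyQuotient {G M F : Type} [Group G] [AddCommGroup M] [Module ℤ M]
    [AddCommGroup F] [Module ℤ F]
    (ρM : Representation ℤ G M) (ρF : Representation ℤ G F) : Prop :=
  ∃ (P : Type) (_ : AddCommGroup P) (_ : Module ℤ P)
    (ρP : Representation ℤ G P) (i : M →ₗ[ℤ] P) (π : P →ₗ[ℤ] F),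
    IsFlabbyResolution ρM ρP ρF i π

/-- First projection of a subgroup of `G × G'` (surjective when the subgroup
is a subdirect product). -/
def projFst {G G' : Type} [Group G] [Group G'] (W : Subgroup (G × G')) : ↥W →* G :=
  (MonoidHom.fst G G').comp W.subtype

/-- Second projection of a subgroup of `G × G'`. -/
def projSnd {G G' : Type} [Group G] [Group G'] (W : Subgroup (G × G')) : ↥W →* G' :=
  (MonoidHom.snd G G').comp W.subtype

/-- fiber cardinality of surjective hom -/
lemma fiber_card_eq {A B : Type} [Group A] [Group B] [Fintype A] [DecidableEq B]
    (ψ : A →* B) {b : B} (hb : b ∈ Set.range ψ) :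
    (Finset.univ.filter fun a => ψ a = b).card = Nat.card ψ.ker := by
  obtain ⟨a₀, ha₀⟩ := hb
  rw [← Fintype.card_subtype]
  have e : {a : A // ψ a = b} ≃ ψ.ker :=
    { toFun := fun a => ⟨a₀⁻¹ * a.1, by
        simp [MonoidHom.mem_ker, ha₀, a.2]⟩
      invFun := fun k => ⟨a₀ * k.1, by
        have hk : ψ k.1 = 1 := k.2
        simp [hk, ha₀]⟩
      left_inv := fun a => by simp
      right_inv := fun k => by simp }
  rw [Fintype.card_congr e, Nat.card_eq_fintype_card]

lemma sum_comp_surj {A B M : Type} [Group A] [Group B] [Fintype A] [Fintype B]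
    [AddCommGroup M] (ψ : A →* B) (hψ : Function.Surjective ψ) (f : B → M) :
    ∑ a : A, f (ψ a) = Nat.card ψ.ker • ∑ b : B, f b := by
  classical
  rw [← Finset.sum_fiberwise' Finset.univ ψ f, Finset.smul_sum]
  refine Finset.sum_congr rfl fun b _ => ?_
  rw [Finset.sum_const, fiber_card_eq ψ (hψ b)]

lemma isPerm_infl {H G M : Type} [Group H] [Group G] [AddCommGroup M] [Module ℤ M]
    (ρ : Representation ℤ G M) (φ : H →* G) (h : IsPermutationRep ρ) :
    IsPermutationRep (inflRep ρ φ) := by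
  obtain ⟨ι, hι, b, hb⟩ := h
  exact ⟨ι, hι, b, fun g i => hb (φ g) i⟩

lemma isPerm_prod {H M N : Type} [Group H] [AddCommGroup M] [Module ℤ M]
    [AddCommGroup N] [Module ℤ N]
    (ρ : Representation ℤ H M) (τ : Representation ℤ H N)
    (hρ : IsPermutationRep ρ) (hτ : IsPermutationRep τ) :
    IsPermutationRep (prodRep ρ τ) := by
  obtain ⟨ι, hι, b, hb⟩ := hρ
  obtain ⟨ι', hι', b', hb'⟩ := hτ
  refine ⟨ι ⊕ ι', by infer_instance, b.prod b', fun g i => ?_⟩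
  cases i with
  | inl i =>
    obtain ⟨j, hj⟩ := hb g i
    exact ⟨Sum.inl j, by
      apply Prod.ext <;> simp [prodRep, hj]⟩
  | inr i =>
    obtain ⟨j, hj⟩ := hb' g i
    exact ⟨Sum.inr j, by
      apply Prod.ext <;> simp [prodRep, hj]⟩

lemma nsmul_cancel_of_free {M : Type} [AddCommGroup M] [Module ℤ M] [Module.Free ℤ M]
    {n : ℕ} (hn : n ≠ 0) {x : M} (h : n • x = 0) : x = 0 := by
  let b := Module.Free.chooseBasis ℤ M
  have h1 : b.repr (n • x) = 0 := by rw [h, map_zero]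
  rw [map_nsmul] at h1
  have h3 : b.repr x = 0 := by
    ext a
    have h2 : n • (b.repr x) a = 0 := by
      have := congrArg (fun f => f a) h1
      simpa using this
    rw [nsmul_eq_mul] at h2
    rcases mul_eq_zero.mp h2 with h' | h'
    · exact absurd (by exact_mod_cast h') hn
    · simpa using h'
  have := congrArg b.repr.symm h3
  simpa using this

lemma isFlabby_infl {H G M : Type} [Group H] [Group G] [Finite H] [Finite G]
    [AddCommGroup M] [Module ℤ M] [Module.Free ℤ M]
    (ρ : Representation ℤ G M) (φ : H →* G) (hρ : IsFlabbyRep ρ) :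
    IsFlabbyRep (inflRep ρ φ) := by
  intro U m hm
  classical
  letI : Fintype ↥U := Fintype.ofFinite _
  set ψ : ↥U →* G := φ.comp U.subtype with hψdef
  letI : Fintype ↥ψ.range := Fintype.ofFinite _
  rw [finsum_eq_sum_of_fintype] at hm
  have h1 : ∑ u : ↥U, ρ (ψ u) m = 0 := hm
  have h2 : ∑ b : ↥ψ.range, ρ (b : G) m = 0 := by
    have hs := sum_comp_surj ψ.rangeRestrict ψ.rangeRestrict_surjective
      (fun b : ↥ψ.range => ρ (b : G) m)
    have hn : Nat.card ↥ψ.rangeRestrict.ker ≠ 0 := Nat.card_pos.ne'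
    have h4 : Nat.card ↥ψ.rangeRestrict.ker • ∑ b : ↥ψ.range, ρ (b : G) m = 0 := by
      rw [← hs]; exact h1
    exact nsmul_cancel_of_free hn h4
  have hmem := hρ ψ.range m (by rw [finsum_eq_sum_of_fintype]; exact h2)
  refine AddSubgroup.closure_mono ?_ hmem
  rintro x ⟨h, m', rfl⟩
  obtain ⟨u, hu⟩ := h.2
  exact ⟨u, m', by rw [← hu]; rfl⟩

lemma fst_sum {ι M N : Type} [AddCommMonoid M] [AddCommMonoid N]
    (s : Finset ι) (f : ι → M × N) : (∑ i ∈ s, f i).1 = ∑ i ∈ s, (f i).1 :=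
  map_sum (AddMonoidHom.fst M N) f s

lemma snd_sum {ι M N : Type} [AddCommMonoid M] [AddCommMonoid N]
    (s : Finset ι) (f : ι → M × N) : (∑ i ∈ s, f i).2 = ∑ i ∈ s, (f i).2 :=
  map_sum (AddMonoidHom.snd M N) f s

lemma mem_closure_prod_left {H M N : Type} [Group H] [AddCommGroup M] [Module ℤ M]
    [AddCommGroup N] [Module ℤ N]
    (ρ : Representation ℤ H M) (τ : Representation ℤ H N) (U : Subgroup H) {m : M}
    (hm : m ∈ AddSubgroup.closure {x : M | ∃ (h : U) (m' : M), x = ρ ((h : H)) m' - m'}) :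
    ((m, 0) : M × N) ∈ AddSubgroup.closure
      {x : M × N | ∃ (h : U) (m' : M × N), x = (prodRep ρ τ) ((h : H)) m' - m'} := by
  have h1 : ((m, 0) : M × N) ∈ (AddSubgroup.closure
      {x : M | ∃ (h : U) (m' : M), x = ρ ((h : H)) m' - m'}).map
      (AddMonoidHom.inl M N) :=
    AddSubgroup.mem_map_of_mem _ hm
  rw [AddMonoidHom.map_closure] at h1
  refine AddSubgroup.closure_mono ?_ h1
  rintro x ⟨y, ⟨h, m', rfl⟩, rfl⟩
  exact ⟨h, (m', 0), by apply Prod.ext <;> simp [prodRep]⟩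

lemma mem_closure_prod_right {H M N : Type} [Group H] [AddCommGroup M] [Module ℤ M]
    [AddCommGroup N] [Module ℤ N]
    (ρ : Representation ℤ H M) (τ : Representation ℤ H N) (U : Subgroup H) {n : N}
    (hn : n ∈ AddSubgroup.closure {x : N | ∃ (h : U) (m' : N), x = τ ((h : H)) m' - m'}) :
    ((0, n) : M × N) ∈ AddSubgroup.closure
      {x : M × N | ∃ (h : U) (m' : M × N), x = (prodRep ρ τ) ((h : H)) m' - m'} := by
  have h1 : ((0, n) : M × N) ∈ (AddSubgroup.closure
      {x : N | ∃ (h : U) (m' : N), x = τ ((h : H)) m' - m'}).map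
      (AddMonoidHom.inr M N) :=
    AddSubgroup.mem_map_of_mem _ hn
  rw [AddMonoidHom.map_closure] at h1
  refine AddSubgroup.closure_mono ?_ h1
  rintro x ⟨y, ⟨h, m', rfl⟩, rfl⟩
  exact ⟨h, (0, m'), by apply Prod.ext <;> simp [prodRep]⟩

lemma isFlabby_prod {H M N : Type} [Group H] [Finite H]
    [AddCommGroup M] [Module ℤ M] [AddCommGroup N] [Module ℤ N]
    (ρ : Representation ℤ H M) (τ : Representation ℤ H N)
    (hρ : IsFlabbyRep ρ) (hτ : IsFlabbyRep τ) :
    IsFlabbyRep (prodRep ρ τ) := by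
  intro U x hx
  classical
  letI : Fintype ↥U := Fintype.ofFinite _
  rw [finsum_eq_sum_of_fintype] at hx
  have h1 : ∑ u : ↥U, ρ ((u : H)) x.1 = 0 := by
    have := congrArg Prod.fst hx
    rw [fst_sum] at this
    exact this
  have h2 : ∑ u : ↥U, τ ((u : H)) x.2 = 0 := by
    have := congrArg Prod.snd hx
    rw [snd_sum] at this
    exact this
  have hm1 := hρ U x.1 (by rw [finsum_eq_sum_of_fintype]; exact h1)
  have hm2 := hτ U x.2 (by rw [finsum_eq_sum_of_fintype]; exact h2)
  have : x = (x.1, (0 : N)) + ((0 : M), x.2) := by simp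
  rw [this]
  exact AddSubgroup.add_mem _ (mem_closure_prod_left ρ τ U hm1)
    (mem_closure_prod_right ρ τ U hm2)

/-- Let `W ≤ G × G'` be a subdirect product with projections
`φ₁ = projFst W`, `φ₂ = projSnd W`.  Let `0 → M → P → F → 0` be a flabby resolution of a
`G`-lattice `M` and `0 → M' → P' → F' → 0` a flabby resolution of a `G'`-lattice `M'`
with `F'` stably permutation (i.e. `[M']^fl = 0`).  Regard `M ⊕ M'` as a `W`-lattice via
`φ₁` on `M` and `φ₂` on `M'`.  Then the inflation of `F ⊕ F'` is a flabby quotient of the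
`W`-lattice `M ⊕ M'` and is similar, as a `W`-lattice, to the inflation of `F`; hence
`[M ⊕ M']^fl = [M]^fl` as `W`-lattices. -/
theorem subdirect_flabby_class_of_prod
    {G G' : Type} [Group G] [Group G'] [Finite G] [Finite G']
    (W : Subgroup (G × G'))
    (hs₁ : Function.Surjective (projFst W)) (hs₂ : Function.Surjective (projSnd W))
    {M P F M' P' F' : Type}
    [AddCommGroup M] [Module ℤ M] [Module.Free ℤ M] [Module.Finite ℤ M]
    [AddCommGroup P] [Module ℤ P] [Module.Free ℤ P] [Module.Finite ℤ P]
    [AddCommGroup F] [Module ℤ F] [Module.Free ℤ F] [Module.Finite ℤ F]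
    [AddCommGroup M'] [Module ℤ M'] [Module.Free ℤ M'] [Module.Finite ℤ M']
    [AddCommGroup P'] [Module ℤ P'] [Module.Free ℤ P'] [Module.Finite ℤ P']
    [AddCommGroup F'] [Module ℤ F'] [Module.Free ℤ F'] [Module.Finite ℤ F']
    (ρM : Representation ℤ G M) (ρP : Representation ℤ G P) (ρF : Representation ℤ G F)
    (ρM' : Representation ℤ G' M') (ρP' : Representation ℤ G' P') (ρF' : Representation ℤ G' F')
    (i : M →ₗ[ℤ] P) (π : P →ₗ[ℤ] F) (i' : M' →ₗ[ℤ] P') (π' : P' →ₗ[ℤ] F')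
    (hres : IsFlabbyResolution ρM ρP ρF i π)
    (hres' : IsFlabbyResolution ρM' ρP' ρF' i' π')
    (hstab : IsStablyPermutationRep ρF') :
    IsFlabbyResolution
        (prodRep (inflRep ρM (projFst W)) (inflRep ρM' (projSnd W)))
        (prodRep (inflRep ρP (projFst W)) (inflRep ρP' (projSnd W)))
        (prodRep (inflRep ρF (projFst W)) (inflRep ρF' (projSnd W)))
        (LinearMap.prodMap i i') (LinearMap.prodMap π π') ∧
    SimilarRep
        (prodRep (inflRep ρF (projFst W)) (inflRep ρF' (projSnd W)))
        (inflRep ρF (projFst W)) := by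
  obtain ⟨⟨hi, hπ, hrk, heqi, heqπ⟩, hPperm, hFflab⟩ := hres
  obtain ⟨⟨hi', hπ', hrk', heqi', heqπ'⟩, hP'perm, hF'flab⟩ := hres'
  constructor
  · refine ⟨⟨?_, ?_, ?_, ?_, ?_⟩, ?_, ?_⟩
    · intro a b hab
      exact Prod.ext (hi (congrArg Prod.fst hab)) (hi' (congrArg Prod.snd hab))
    · intro y
      obtain ⟨a, ha⟩ := hπ y.1
      obtain ⟨b, hb⟩ := hπ' y.2
      exact ⟨(a, b), Prod.ext ha hb⟩
    · ext x
      simp only [LinearMap.mem_range, LinearMap.mem_ker, LinearMap.prodMap_apply]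
      constructor
      · rintro ⟨y, rfl⟩
        have h1 : π (i y.1) = 0 := by
          have : i y.1 ∈ LinearMap.ker π := by
            rw [← hrk]; exact LinearMap.mem_range_self i y.1
          exact this
        have h2 : π' (i' y.2) = 0 := by
          have : i' y.2 ∈ LinearMap.ker π' := by
            rw [← hrk']; exact LinearMap.mem_range_self i' y.2
          exact this
        exact Prod.ext h1 h2
      · intro hx
        have h1 : x.1 ∈ LinearMap.range i := by
          rw [hrk]; exact congrArg Prod.fst hx
        have h2 : x.2 ∈ LinearMap.range i' := by
          rw [hrk']; exact congrArg Prod.snd hx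
        obtain ⟨a, ha⟩ := h1
        obtain ⟨b, hb⟩ := h2
        exact ⟨(a, b), Prod.ext ha hb⟩
    · intro g m
      exact Prod.ext (heqi _ _) (heqi' _ _)
    · intro g x
      exact Prod.ext (heqπ _ _) (heqπ' _ _)
    · exact isPerm_prod _ _ (isPerm_infl ρP _ hPperm) (isPerm_infl ρP' _ hP'perm)
    · exact isFlabby_prod _ _ (isFlabby_infl ρF _ hFflab) (isFlabby_infl ρF' _ hF'flab)
  · obtain ⟨Q, iQ1, iQ2, σ, Q', iQ'1, iQ'2, σ', hQ, hQ', e, he⟩ := hstab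
    refine ⟨Q, iQ1, iQ2, inflRep σ (projSnd W), Q', iQ'1, iQ'2, inflRep σ' (projSnd W),
      isPerm_infl σ _ hQ, isPerm_infl σ' _ hQ', ?_⟩
    refine ⟨(LinearEquiv.prodAssoc ℤ F F' Q).trans ((LinearEquiv.refl ℤ F).prodCongr e), ?_⟩
    intro g m
    exact Prod.ext rfl (he (projSnd W g) (m.1.2, m.2))
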